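/- For each x ∈ ℝ where the function fᵢ(x) = log(|x| + 1) is differentiable (i.e., x ≠ 0), and for every y ∈ ℝ: log(|y|+1) - log(|x|+1) ≥ fᵢ'(x) · ((1+|x|)/(1+|y|))·(y - x); moreover x = 0 is the global minimizer. Hence f(x) = Σᵢ log(|xᵢ|+1) on ℝⁿ is invex with kernel η(x,y) with i-th component ((1+|xᵢ|)/(1+|yᵢ|))·(yᵢ - xᵢ). -/

import Mathlib

open RealInnerProductSpace


noncomputable def gfun : ℝ → ℝ := fun t => Real.log (|t| + 1)

lemma gfun_hasDerivAt {x : ℝ} (hx : x ≠ 0) :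
    HasDerivAt gfun (Real.sign x / (|x| + 1)) x := by
  rcases hx.lt_or_gt with h | h
  · have h1 : HasDerivAt (fun t : ℝ => Real.log (-t + 1)) (Real.sign x / (|x| + 1)) x := by
      have := (Real.hasDerivAt_log (x := -x + 1) (by nlinarith)).comp x
        (((hasDerivAt_id x).neg).add_const 1)
      refine this.congr_deriv ?_
      rw [Real.sign_of_neg h, abs_of_neg h]
      field_simp
    refine h1.congr_of_eventuallyEq ?_
    filter_upwards [eventually_lt_nhds h] with t ht
    simp [gfun, abs_of_neg ht]
  · have h1 : HasDerivAt (fun t : ℝ => Real.log (t + 1)) (Real.sign x / (|x| + 1)) x := by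
      have := (Real.hasDerivAt_log (x := x + 1) (by nlinarith)).comp x
        ((hasDerivAt_id x).add_const 1)
      refine this.congr_deriv ?_
      rw [Real.sign_of_pos h, abs_of_pos h]
      field_simp
    refine h1.congr_of_eventuallyEq ?_
    filter_upwards [eventually_gt_nhds h] with t ht
    simp [gfun, abs_of_pos ht]

lemma gfun_not_diff_zero : ¬ DifferentiableAt ℝ gfun 0 := by
  intro h
  have habs : (fun t : ℝ => |t|) = fun t => Real.exp (gfun t) - 1 := by
    funext t
    rw [gfun, Real.exp_log (by positivity)]
    ring
  have : DifferentiableAt ℝ (fun t : ℝ => Real.exp (gfun t) - 1) 0 := h.exp.sub_const 1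
  rw [← habs] at this
  exact not_differentiableAt_abs_zero this

lemma gfun_ineq {x : ℝ} (hx : x ≠ 0) (y : ℝ) :
    Real.log (|y| + 1) - Real.log (|x| + 1) ≥
      Real.sign x / (|x| + 1) * ((1 + |x|) / (1 + |y|) * (y - x)) := by
  have hy1 : (0:ℝ) < 1 + |y| := by positivity
  have hx1 : (0:ℝ) < 1 + |x| := by positivity
  have hr : Real.sign x / (|x| + 1) * ((1 + |x|) / (1 + |y|) * (y - x))
      = Real.sign x * (y - x) / (1 + |y|) := by
    field_simp
    ring
  rw [hr]
  have hsx : Real.sign x * x = |x| := by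
    rcases hx.lt_or_gt with h | h
    · rw [Real.sign_of_neg h, abs_of_neg h]; ring
    · rw [Real.sign_of_pos h, abs_of_pos h]; ring
  have hsy : Real.sign x * y ≤ |y| := by
    rcases hx.lt_or_gt with h | h
    · rw [Real.sign_of_neg h]; have := neg_abs_le y; linarith
    · rw [Real.sign_of_pos h]; simpa using le_abs_self y
  have step1 : Real.sign x * (y - x) / (1 + |y|) ≤ (|y| - |x|) / (1 + |y|) := by
    gcongr
    nlinarith
  have step2 : (|y| - |x|) / (1 + |y|) ≤ Real.log (|y| + 1) - Real.log (|x| + 1) := by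
    have hlog := Real.log_le_sub_one_of_pos (x := (1 + |x|) / (1 + |y|)) (by positivity)
    rw [Real.log_div (by positivity) (by positivity)] at hlog
    have e1 : |x| + 1 = 1 + |x| := by ring
    have e2 : |y| + 1 = 1 + |y| := by ring
    rw [e1, e2]
    have : (1 + |x|) / (1 + |y|) - 1 = -((|y| - |x|) / (1 + |y|)) := by
      field_simp
      ring
    linarith [hlog.trans_eq this]
  linarith

lemma comp_ne_zero {n : ℕ} (x : EuclideanSpace ℝ (Fin n))
    (h : DifferentiableAt ℝ (fun z : EuclideanSpace ℝ (Fin n) => ∑ i, gfun (z i)) x)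
    (i : Fin n) : x i ≠ 0 := by
  intro hxi
  set φ : ℝ → EuclideanSpace ℝ (Fin n) :=
    fun t => x + (t - x i) • (EuclideanSpace.single i (1:ℝ)) with hφ
  have hφdiff : DifferentiableAt ℝ φ (x i) := by
    apply DifferentiableAt.const_add
    exact (differentiableAt_id.sub_const _).smul_const _
  have hφx : φ (x i) = x := by simp [hφ]
  have hcomp : DifferentiableAt ℝ (fun t => ∑ j, gfun (φ t j)) (x i) := by
    have h' : DifferentiableAt ℝ (fun z : EuclideanSpace ℝ (Fin n) => ∑ i, gfun (z i)) (φ (x i)) := by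
      rw [hφx]; exact h
    exact h'.comp (x i) hφdiff
  have key : (fun t : ℝ => ∑ j, gfun (φ t j)) =
      fun t => (∑ j ∈ Finset.univ.erase i, gfun (x j)) + gfun t := by
    funext t
    rw [← Finset.sum_erase_add _ _ (Finset.mem_univ i)]
    congr 1
    · apply Finset.sum_congr rfl
      intro j hj
      have hji : j ≠ i := Finset.ne_of_mem_erase hj
      simp [hφ, EuclideanSpace.single_apply, hji]
    · simp [hφ, EuclideanSpace.single_apply]
  rw [key] at hcomp
  have : DifferentiableAt ℝ gfun (x i) := by
    simpa using hcomp.const_sub (∑ j ∈ Finset.univ.erase i, gfun (x j)) |>.neg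
  rw [hxi] at this
  exact gfun_not_diff_zero this

lemma gradient_sum_eq {n : ℕ} (x : EuclideanSpace ℝ (Fin n))
    (h : DifferentiableAt ℝ (fun z : EuclideanSpace ℝ (Fin n) => ∑ i, gfun (z i)) x) :
    gradient (fun z : EuclideanSpace ℝ (Fin n) => ∑ i, gfun (z i)) x =
      (WithLp.toLp 2 (fun j => Real.sign (x j) / (|x j| + 1)) : EuclideanSpace ℝ (Fin n)) := by
  set G : EuclideanSpace ℝ (Fin n) := WithLp.toLp 2 (fun j => Real.sign (x j) / (|x j| + 1)) with hG
  have hF : HasFDerivAt (fun z : EuclideanSpace ℝ (Fin n) => ∑ i, gfun (z i))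
      (∑ j, (Real.sign (x j) / (|x j| + 1)) •
        (EuclideanSpace.proj j : EuclideanSpace ℝ (Fin n) →L[ℝ] ℝ)) x := by
    apply HasFDerivAt.fun_sum
    intro j _
    exact (gfun_hasDerivAt (comp_ne_zero x h j)).comp_hasFDerivAt (h₂ := gfun) (f := fun z : EuclideanSpace ℝ (Fin n) => z j) x
      (EuclideanSpace.proj j : EuclideanSpace ℝ (Fin n) →L[ℝ] ℝ).hasFDerivAt
  have hGrad : HasGradientAt (fun z : EuclideanSpace ℝ (Fin n) => ∑ i, gfun (z i)) G x := by
    rw [hasGradientAt_iff_hasFDerivAt]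
    refine hF.congr_fderiv ?_
    apply ContinuousLinearMap.ext
    intro v
    simp [InnerProductSpace.toDual_apply_apply, PiLp.inner_apply, RCLike.inner_apply, hG]
    exact Finset.sum_congr rfl fun i _ => mul_comm _ _
  exact hGrad.gradient

theorem invex_log_abs_regularizer {n : ℕ} :
    (∀ x : ℝ, x ≠ 0 → ∀ y : ℝ,
      Real.log (|y| + 1) - Real.log (|x| + 1) ≥
        deriv (fun t => Real.log (|t| + 1)) x * ((1 + |x|) / (1 + |y|) * (y - x))) ∧
    (∀ y : ℝ, Real.log (|(0 : ℝ)| + 1) ≤ Real.log (|y| + 1)) ∧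
    (∀ x y : EuclideanSpace ℝ (Fin n),
      DifferentiableAt ℝ (fun z : EuclideanSpace ℝ (Fin n) =>
        ∑ i, Real.log (|z i| + 1)) x →
      (∑ i, Real.log (|y i| + 1)) - (∑ i, Real.log (|x i| + 1)) ≥
        ⟪gradient (fun z : EuclideanSpace ℝ (Fin n) => ∑ i, Real.log (|z i| + 1)) x,
          (WithLp.toLp 2 (fun i => (1 + |x i|) / (1 + |y i|) * (y i - x i)) : EuclideanSpace ℝ (Fin n))⟫) := by
  refine ⟨?_, ?_, ?_⟩
  · intro x hx y
    have hd : deriv (fun t => Real.log (|t| + 1)) x = Real.sign x / (|x| + 1) :=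
      (gfun_hasDerivAt hx).deriv
    rw [hd]
    exact gfun_ineq hx y
  · intro y
    simp only [abs_zero, zero_add, Real.log_one]
    exact Real.log_nonneg (by simp [le_add_of_nonneg_left (abs_nonneg y)])
  · intro x y h
    have h' : DifferentiableAt ℝ (fun z : EuclideanSpace ℝ (Fin n) => ∑ i, gfun (z i)) x := h
    have hg := gradient_sum_eq x h'
    have hgr : gradient (fun z : EuclideanSpace ℝ (Fin n) => ∑ i, Real.log (|z i| + 1)) x =
        (WithLp.toLp 2 (fun j => Real.sign (x j) / (|x j| + 1)) : EuclideanSpace ℝ (Fin n)) := hg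
    rw [hgr]
    simp only [PiLp.inner_apply, RCLike.inner_apply, starRingEnd_apply, star_trivial]
    rw [← Finset.sum_sub_distrib]
    exact Finset.sum_le_sum fun i _ => by rw [mul_comm]; exact gfun_ineq (comp_ne_zero x h' i) (y i)
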